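/- Let b > 0, λ ∈ (1,∞), and let f_μ(t) := (1/(2b)) exp(−|t−μ|/b) be the Laplace density with location μ and scale b. Then D_λ(f_1, f_0) = (1/(λ−1)) · log{ (λ/(2λ−1)) · exp((λ−1)/b) + ((λ−1)/(2λ−1)) · exp(−λ/b) }, i.e. ∫_ℝ f_1(t)^λ f_0(t)^{1−λ} dt = (λ/(2λ−1)) e^{(λ−1)/b} + ((λ−1)/(2λ−1)) e^{−λ/b}. -/

import Mathlib

open MeasureTheory

/-- The Laplace density with location `μ` and scale `b`. -/
noncomputable def laplacePdf (b μ t : ℝ) : ℝ := (1 / (2 * b)) * Real.exp (-|t - μ| / b)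

open Real Set in
private lemma laplace_renyi_integral (b l : ℝ) (hb : 0 < b) (hl : 1 < l) :
    (∫ t : ℝ, laplacePdf b 1 t ^ l * laplacePdf b 0 t ^ (1 - l))
      = (l / (2 * l - 1)) * Real.exp ((l - 1) / b)
        + ((l - 1) / (2 * l - 1)) * Real.exp (-l / b) := by
  have hb' : (0:ℝ) < b⁻¹ := inv_pos.mpr hb
  have hbne : b ≠ 0 := hb.ne'
  have h2b : (0:ℝ) < 1 / (2 * b) := by positivity
  have h2l : (2 * l - 1) ≠ 0 := by nlinarith
  set F : ℝ → ℝ := fun t => (1 / (2 * b)) * Real.exp ((-l * |t - 1| + (l - 1) * |t|) / b) with hF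
  -- Step 1: pointwise identity
  have hpt : ∀ t : ℝ, laplacePdf b 1 t ^ l * laplacePdf b 0 t ^ (1 - l) = F t := by
    intro t
    simp only [laplacePdf, hF]
    rw [Real.mul_rpow h2b.le (Real.exp_pos _).le, Real.mul_rpow h2b.le (Real.exp_pos _).le,
      ← Real.exp_mul, ← Real.exp_mul, mul_mul_mul_comm, ← Real.rpow_add h2b,
      add_sub_cancel, Real.rpow_one, ← Real.exp_add]
    congr 1
    field_simp
    ring
  simp only [hpt]
  -- continuity of F
  have hcont : Continuous F := by
    apply Continuous.mul continuous_const
    exact (((continuous_const.mul ((continuous_id.sub continuous_const).abs)).add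
      (continuous_const.mul continuous_abs)).div_const b).rexp
  -- Integrability pieces
  have hIexp : IntegrableOn (fun x : ℝ => Real.exp (b⁻¹ * x)) (Iic 0) := by
    rw [integrableOn_Iic_iff_integrableOn_Iio,
      ← (Measure.measurePreserving_neg (volume : Measure ℝ)).integrableOn_comp_preimage
        (Homeomorph.neg ℝ).measurableEmbedding]
    simp only [Function.comp_def, neg_preimage, neg_Iio, neg_zero, mul_neg]
    simpa [neg_mul] using exp_neg_integrableOn_Ioi 0 hb'
  have heq1 : ∀ t ∈ Iic (0:ℝ), F t = ((1 / (2 * b)) * Real.exp (-l / b)) * Real.exp (b⁻¹ * t) := by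
    intro t ht
    simp only [mem_Iic] at ht
    simp only [hF]
    rw [abs_of_nonpos ht, abs_of_nonpos (by linarith : t - 1 ≤ 0), mul_assoc, ← Real.exp_add]
    congr 1
    field_simp
    ring
  have heq2 : ∀ t ∈ Ioc (0:ℝ) 1, F t
      = (1 / (2 * b)) * Real.exp ((2 * l - 1) / b * t + (-l / b)) := by
    intro t ht
    obtain ⟨ht0, ht1⟩ := ht
    simp only [hF]
    rw [abs_of_pos ht0, abs_of_nonpos (by linarith : t - 1 ≤ 0)]
    congr 1
    field_simp
    ring
  have heq3 : ∀ t ∈ Ioi (1:ℝ), F t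
      = ((1 / (2 * b)) * Real.exp (l / b)) * Real.exp (-(b⁻¹ * t)) := by
    intro t ht
    simp only [mem_Ioi] at ht
    simp only [hF]
    rw [abs_of_pos (by linarith : (0:ℝ) < t), abs_of_pos (by linarith : (0:ℝ) < t - 1),
      mul_assoc, ← Real.exp_add]
    congr 1
    field_simp
    ring
  have hI1 : IntegrableOn F (Iic 0) :=
    IntegrableOn.congr_fun (hIexp.const_mul _) (fun t ht => (heq1 t ht).symm) measurableSet_Iic
  have hI2 : IntegrableOn F (Ioc 0 1) := hcont.integrableOn_Ioc
  have hI3 : IntegrableOn F (Ioi 1) := by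
    have h := (show IntegrableOn (fun x : ℝ => Real.exp (-(b⁻¹ * x))) (Ioi 1) from
      by simpa [neg_mul] using exp_neg_integrableOn_Ioi 1 hb').const_mul
      ((1 / (2 * b)) * Real.exp (l / b))
    exact IntegrableOn.congr_fun h (fun t ht => (heq3 t ht).symm) measurableSet_Ioi
  have hI23 : IntegrableOn F (Ioi 0) := by
    rw [← Ioc_union_Ioi_eq_Ioi (zero_le_one)]
    exact hI2.union hI3
  -- split the integral
  rw [← intervalIntegral.integral_Iic_add_Ioi hI1 hI23, ← Ioc_union_Ioi_eq_Ioi (zero_le_one : (0:ℝ) ≤ 1),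
    setIntegral_union (Ioc_disjoint_Ioi le_rfl) measurableSet_Ioi hI2 hI3]
  -- piece 1
  have hval1 : (∫ t in Iic (0:ℝ), F t) = (1 / 2) * Real.exp (-l / b) := by
    rw [setIntegral_congr_fun measurableSet_Iic heq1, integral_const_mul]
    have h1 : (∫ x : ℝ in Iic 0, (fun y => Real.exp (-(b⁻¹ * y))) (-x))
        = ∫ x : ℝ in Ioi (0:ℝ), Real.exp (-(b⁻¹ * x)) := by
      simpa using integral_comp_neg_Iic (0:ℝ) (fun y => Real.exp (-(b⁻¹ * y)))
    simp only [mul_neg, neg_neg] at h1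
    rw [h1, integral_comp_mul_left_Ioi (fun x => Real.exp (-x)) 0 hb']
    simp only [mul_zero, integral_exp_neg_Ioi, neg_zero, Real.exp_zero, smul_eq_mul,
      inv_inv, mul_one]
    field_simp
  -- piece 3
  have hval3 : (∫ t in Ioi (1:ℝ), F t) = (1 / 2) * Real.exp ((l - 1) / b) := by
    rw [setIntegral_congr_fun measurableSet_Ioi heq3, integral_const_mul,
      integral_comp_mul_left_Ioi (fun x => Real.exp (-x)) 1 hb']
    simp only [mul_one, integral_exp_neg_Ioi, smul_eq_mul, inv_inv]
    have he : Real.exp (l / b) * Real.exp (-b⁻¹) = Real.exp ((l - 1) / b) := by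
      rw [← Real.exp_add]; congr 1; field_simp; ring
    rw [← he]
    field_simp
  -- piece 2
  have hval2 : (∫ t in Ioc (0:ℝ) 1, F t)
      = (1 / (2 * b)) * (b / (2 * l - 1) * (Real.exp ((l - 1) / b) - Real.exp (-l / b))) := by
    rw [setIntegral_congr_fun measurableSet_Ioc heq2,
      ← intervalIntegral.integral_of_le (zero_le_one : (0:ℝ) ≤ 1),
      intervalIntegral.integral_const_mul]
    have hc : (2 * l - 1) / b ≠ 0 := div_ne_zero h2l hbne
    rw [intervalIntegral.integral_comp_mul_add Real.exp hc (-l / b)]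
    simp only [mul_zero, zero_add, mul_one, smul_eq_mul, integral_exp]
    have e1 : (2 * l - 1) / b + -l / b = (l - 1) / b := by field_simp; ring
    rw [e1]
    congr 1
    field_simp
  rw [hval1, hval2, hval3]
  field_simp
  ring

/-- Exact Rényi divergence of order `λ ∈ (1,∞)` between Laplace densities `f_1` and `f_0`
with common scale `b`:
`∫ f_1^λ f_0^{1-λ} = (λ/(2λ-1)) e^{(λ-1)/b} + ((λ-1)/(2λ-1)) e^{-λ/b}`, hence
`D_λ(f_1,f_0) = (1/(λ-1)) log { (λ/(2λ-1)) e^{(λ-1)/b} + ((λ-1)/(2λ-1)) e^{-λ/b} }`. -/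
theorem renyiDiv_laplace (b l : ℝ) (hb : 0 < b) (hl : 1 < l) :
    (∫ t : ℝ, laplacePdf b 1 t ^ l * laplacePdf b 0 t ^ (1 - l))
      = (l / (2 * l - 1)) * Real.exp ((l - 1) / b)
        + ((l - 1) / (2 * l - 1)) * Real.exp (-l / b) ∧
    (1 / (l - 1)) * Real.log (∫ t : ℝ, laplacePdf b 1 t ^ l * laplacePdf b 0 t ^ (1 - l))
      = (1 / (l - 1)) * Real.log ((l / (2 * l - 1)) * Real.exp ((l - 1) / b)
        + ((l - 1) / (2 * l - 1)) * Real.exp (-l / b)) := by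
  have h := laplace_renyi_integral b l hb hl
  exact ⟨h, by rw [h]⟩
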